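/- Let T be a quantum Markov semigroup on B(H) and F(T) = {x : T_t(x) = x for all t}. Then F(T) is a *-algebra if and only if F(T) ⊆ N(T), where N(T) is the decoherence-free subalgebra. -/

import Mathlib

/-- Complete positivity of a linear map on `B(H)`. -/
def IsCompletelyPositive {H : Type} [NormedAddCommGroup H] [InnerProductSpace ℂ H]
    [CompleteSpace H] (T : (H →L[ℂ] H) →ₗ[ℂ] (H →L[ℂ] H)) : Prop :=
  ∀ (n : ℕ) (a b : Fin n → (H →L[ℂ] H)),
    (∑ i, ∑ j, star (b i) * T (star (a i) * a j) * b j).IsPositive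

open scoped InnerProductSpace ComplexConjugate

namespace QMSaux

variable {H : Type} [NormedAddCommGroup H] [InnerProductSpace ℂ H] [CompleteSpace H]

lemma star_apply_inner (A : H →L[ℂ] H) (x y : H) :
    ⟪x, (star A) y⟫_ℂ = ⟪A x, y⟫_ℂ := by
  rw [ContinuousLinearMap.star_eq_adjoint, ContinuousLinearMap.adjoint_inner_right]

/-- Operator-valued Schwarz-type positivity for a unital CP map. -/
lemma schwarz_pos (S : (H →L[ℂ] H) →ₗ[ℂ] (H →L[ℂ] H)) (hCP : IsCompletelyPositive S)
    (hu : S 1 = 1) (hr : ∀ x, S (star x) = star (S x)) (a z : H →L[ℂ] H) (ξ η : H) :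
    0 ≤ Complex.re ((⟪ξ, S (star a * a) ξ⟫_ℂ - ⟪S a ξ, S a ξ⟫_ℂ)
        + (⟪ξ, S (star a * z) η⟫_ℂ - ⟪S a ξ, S z η⟫_ℂ)
        + (starRingEnd ℂ) (⟪ξ, S (star a * z) η⟫_ℂ - ⟪S a ξ, S z η⟫_ℂ)
        + (⟪η, S (star z * z) η⟫_ℂ - ⟪S z η, S z η⟫_ℂ)) := by
  rcases subsingleton_or_nontrivial H with hs | hn
  · have hξ : ξ = 0 := Subsingleton.elim _ _
    have hη : η = 0 := Subsingleton.elim _ _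
    simp [hξ, hη]
  · obtain ⟨w, hw⟩ := exists_ne (0 : H)
    set ζ : H := ‖w‖⁻¹ • w with hζdef
    have hnζ : ‖ζ‖ = 1 := by
      rw [hζdef, norm_smul, norm_inv, norm_norm,
        inv_mul_cancel₀ (norm_ne_zero_iff.mpr hw)]
    have hζ : ⟪ζ, ζ⟫_ℂ = 1 := by
      rw [inner_self_eq_norm_sq_to_K, hnζ]; norm_num
    set v : Fin 3 → H := ![-(S a ξ + S z η), ξ, η] with hv
    set b : Fin 3 → (H →L[ℂ] H) := fun i => (innerSL ℂ ζ).smulRight (v i) with hb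
    have hbζ : ∀ i, b i ζ = v i := by
      intro i; simp [hb, hζ, hnζ]
    have hP := (hCP 3 ![1, a, z] b).2 ζ
    rw [ContinuousLinearMap.reApplyInnerSelf_apply] at hP
    rw [inner_re_symm] at hP
    have expand : ⟪ζ, (∑ i, ∑ j,
        star (b i) * S (star (![1,a,z] i) * ![1,a,z] j) * b j) ζ⟫_ℂ
        = ∑ i, ∑ j, ⟪v i, S (star (![1,a,z] i) * ![1,a,z] j) (v j)⟫_ℂ := by
      rw [ContinuousLinearMap.sum_apply, inner_sum]
      refine Finset.sum_congr rfl fun i _ => ?_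
      rw [ContinuousLinearMap.sum_apply, inner_sum]
      refine Finset.sum_congr rfl fun j _ => ?_
      rw [ContinuousLinearMap.mul_apply, ContinuousLinearMap.mul_apply,
        star_apply_inner, hbζ, hbζ]
    rw [expand] at hP
    have hstar_za : star z * a = star (star a * z) := by
      rw [star_mul, star_star]
    have hsum : (∑ i, ∑ j, ⟪v i, S (star (![1,a,z] i) * ![1,a,z] j) (v j)⟫_ℂ)
        = ((⟪ξ, S (star a * a) ξ⟫_ℂ - ⟪S a ξ, S a ξ⟫_ℂ)
        + (⟪ξ, S (star a * z) η⟫_ℂ - ⟪S a ξ, S z η⟫_ℂ)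
        + (starRingEnd ℂ) (⟪ξ, S (star a * z) η⟫_ℂ - ⟪S a ξ, S z η⟫_ℂ)
        + (⟪η, S (star z * z) η⟫_ℂ - ⟪S z η, S z η⟫_ℂ)) := by
      simp only [Fin.sum_univ_three, hv, Matrix.cons_val_zero, Matrix.cons_val_one,
        Matrix.head_cons, Matrix.cons_val_two, Matrix.tail_cons, star_one, one_mul,
        mul_one, hu, hr, hstar_za, star_apply_inner, ContinuousLinearMap.one_apply]
      simp only [map_sub, inner_conj_symm]
      simp only [inner_neg_left, inner_neg_right, inner_add_left, inner_add_right]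
      ring
    rw [hsum] at hP
    exact hP

/-- Multiplicative-domain property: if Schwarz equality holds for `a`,
then `S (a* z) = S(a)* S(z)` for all `z`. -/
lemma schwarz_mult (S : (H →L[ℂ] H) →ₗ[ℂ] (H →L[ℂ] H)) (hCP : IsCompletelyPositive S)
    (hu : S 1 = 1) (hr : ∀ x, S (star x) = star (S x)) (a : H →L[ℂ] H)
    (ha : S (star a * a) = star (S a) * S a) (z : H →L[ℂ] H) :
    S (star a * z) = star (S a) * S z := by
  apply ContinuousLinearMap.ext; intro η
  apply ext_inner_left ℂ; intro ξ
  have hrhs : ⟪ξ, (star (S a) * S z) η⟫_ℂ = ⟪S a ξ, S z η⟫_ℂ := by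
    rw [ContinuousLinearMap.mul_apply, star_apply_inner]
  rw [hrhs]
  set c := ⟪ξ, S (star a * z) η⟫_ℂ - ⟪S a ξ, S z η⟫_ℂ with hc
  suffices hc0 : c = 0 by
    rw [hc] at hc0; exact sub_eq_zero.mp hc0
  set K := Complex.re (⟪η, S (star z * z) η⟫_ℂ - ⟪S z η, S z η⟫_ℂ) with hK
  have main : ∀ μ : ℂ, 0 ≤ 2 * Complex.re ((starRingEnd ℂ) μ * c) + K := by
    intro μ
    have h := schwarz_pos S hCP hu hr a z (μ • ξ) η
    have h1 : ⟪μ • ξ, S (star a * a) (μ • ξ)⟫_ℂ - ⟪S a (μ • ξ), S a (μ • ξ)⟫_ℂ = 0 := by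
      rw [ha, ContinuousLinearMap.mul_apply, star_apply_inner, sub_self]
    have h2 : ⟪μ • ξ, S (star a * z) η⟫_ℂ - ⟪S a (μ • ξ), S z η⟫_ℂ
        = (starRingEnd ℂ) μ * c := by
      rw [hc, map_smul, inner_smul_left, inner_smul_left]; ring
    rw [h1, h2] at h
    have hre : Complex.re (0 + (starRingEnd ℂ) μ * c
        + (starRingEnd ℂ) ((starRingEnd ℂ) μ * c)
        + (⟪η, S (star z * z) η⟫_ℂ - ⟪S z η, S z η⟫_ℂ))
        = 2 * Complex.re ((starRingEnd ℂ) μ * c) + K := by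
      simp [Complex.add_re, Complex.conj_re, hK]; ring
    rw [hre] at h
    exact h
  have habs : ∀ s : ℝ, 0 ≤ -2 * (s * Complex.normSq c) + K := by
    intro s
    have h := main (-(s : ℂ) * c)
    have e : (starRingEnd ℂ) (-(s : ℂ) * c) * c = -(s : ℂ) * ((Complex.normSq c : ℝ) : ℂ) := by
      rw [map_mul, map_neg, Complex.conj_ofReal]
      rw [mul_assoc, Complex.normSq_eq_conj_mul_self]
    rw [e] at h
    have e2 : Complex.re (-(s : ℂ) * ((Complex.normSq c : ℝ) : ℂ))
        = -(s * Complex.normSq c) := by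
      rw [← Complex.ofReal_neg, ← Complex.ofReal_mul, Complex.ofReal_re]; ring_nf
    rw [e2] at h
    linarith
  have hn : Complex.normSq c = 0 := by
    by_contra hne
    have hpos : 0 < Complex.normSq c :=
      lt_of_le_of_ne (Complex.normSq_nonneg c) (Ne.symm hne)
    have h := habs ((K + 1) / (2 * Complex.normSq c))
    have e : (K + 1) / (2 * Complex.normSq c) * Complex.normSq c = (K + 1) / 2 := by
      field_simp
    rw [e] at h
    linarith
  exact Complex.normSq_eq_zero.mp hn

end QMSaux

/-- the fixed point set `F(T)` of a quantum Markov semigroup is a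
*-algebra (i.e. closed under products; it is always a self-adjoint subspace)
if and only if `F(T)` is contained in the decoherence-free subalgebra `N(T)`. -/
theorem fixed_points_algebra_iff_subset_df
    {H : Type} [NormedAddCommGroup H] [InnerProductSpace ℂ H] [CompleteSpace H]
    (T : ℝ → (H →L[ℂ] H) →ₗ[ℂ] (H →L[ℂ] H))
    (hCP : ∀ t, 0 ≤ t → IsCompletelyPositive (T t))
    (hunital : ∀ t, 0 ≤ t → T t 1 = 1)
    (hreal : ∀ t, 0 ≤ t → ∀ a, T t (star a) = star (T t a))
    (hzero : T 0 = LinearMap.id)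
    (hsemi : ∀ t s, 0 ≤ t → 0 ≤ s → ∀ x, T (t + s) x = T t (T s x)) :
    (∀ x ∈ {x : H →L[ℂ] H | ∀ t, 0 ≤ t → T t x = x},
       ∀ y ∈ {x : H →L[ℂ] H | ∀ t, 0 ≤ t → T t x = x},
         x * y ∈ {x : H →L[ℂ] H | ∀ t, 0 ≤ t → T t x = x}) ↔
    {x : H →L[ℂ] H | ∀ t, 0 ≤ t → T t x = x} ⊆
      {x : H →L[ℂ] H | ∀ t, 0 ≤ t →
        T t (star x * x) = star (T t x) * T t x ∧
        T t (x * star x) = T t x * star (T t x)} := by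
  constructor
  · intro hmul x hx t ht
    have hxs : (star x) ∈ {x : H →L[ℂ] H | ∀ t, 0 ≤ t → T t x = x} := by
      intro s hs
      rw [hreal s hs, hx s hs]
    constructor
    · rw [hmul (star x) hxs x hx t ht, hx t ht]
    · rw [hmul x hx (star x) hxs t ht, hx t ht]
  · intro hsub x hx y hy t ht
    have hx' := hsub hx t ht
    have hxst : T t (star x) = star x := by rw [hreal t ht, hx t ht]
    have ha : T t (star (star x) * star x) = star (T t (star x)) * T t (star x) := by
      rw [star_star, hxst, star_star, hx'.2, hx t ht]
    have hm := QMSaux.schwarz_mult (T t) (hCP t ht) (hunital t ht) (hreal t ht)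
      (star x) ha y
    rw [star_star, hxst, star_star] at hm
    rw [hy t ht] at hm
    exact hm
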